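/- For every prime p and every field F of characteristic p, there exists a finite group G of order p^5 such that the group algebra F[G] is not a centrally essential ring. -/

import Mathlib

/-- A ring `R` is *centrally essential* if for every nonzero `r ∈ R` there is a central
element `c` such that `c * r` is a nonzero central element. -/
def IsCentrallyEssential (R : Type*) [Ring R] : Prop :=
  ∀ r : R, r ≠ 0 → ∃ c ∈ Subring.center R, c * r ≠ 0 ∧ c * r ∈ Subring.center R

namespace CE5

/-- The group `1 + N` for the nilpotent algebra `N` of matrices
`[[0,a,b,c],[0,0,d,e],[0,0,0,d],[0,0,0,0]]` over `ZMod p`.  It has order `p^5`. -/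
@[ext]
structure G5 (p : ℕ) : Type where
  a : ZMod p
  b : ZMod p
  c : ZMod p
  d : ZMod p
  e : ZMod p

namespace G5

variable {p : ℕ}

instance : One (G5 p) := ⟨⟨0, 0, 0, 0, 0⟩⟩

instance : Mul (G5 p) :=
  ⟨fun x y => ⟨x.a + y.a, x.b + y.b + x.a * y.d,
    x.c + y.c + x.a * y.e + x.b * y.d, x.d + y.d, x.e + y.e + x.d * y.d⟩⟩

instance : Inv (G5 p) :=
  ⟨fun x => ⟨-x.a, -x.b + x.a * x.d,
    -x.c + x.a * x.e - x.a * x.d * x.d + x.b * x.d, -x.d, -x.e + x.d * x.d⟩⟩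

@[simp] lemma mk_a (a b c d e : ZMod p) : (G5.mk a b c d e).a = a := rfl
@[simp] lemma mk_b (a b c d e : ZMod p) : (G5.mk a b c d e).b = b := rfl
@[simp] lemma mk_c (a b c d e : ZMod p) : (G5.mk a b c d e).c = c := rfl
@[simp] lemma mk_d (a b c d e : ZMod p) : (G5.mk a b c d e).d = d := rfl
@[simp] lemma mk_e (a b c d e : ZMod p) : (G5.mk a b c d e).e = e := rfl

@[simp] lemma one_a : (1 : G5 p).a = 0 := rfl
@[simp] lemma one_b : (1 : G5 p).b = 0 := rfl
@[simp] lemma one_c : (1 : G5 p).c = 0 := rfl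
@[simp] lemma one_d : (1 : G5 p).d = 0 := rfl
@[simp] lemma one_e : (1 : G5 p).e = 0 := rfl

@[simp] lemma mul_a (x y : G5 p) : (x * y).a = x.a + y.a := rfl
@[simp] lemma mul_b (x y : G5 p) : (x * y).b = x.b + y.b + x.a * y.d := rfl
@[simp] lemma mul_c (x y : G5 p) : (x * y).c = x.c + y.c + x.a * y.e + x.b * y.d := rfl
@[simp] lemma mul_d (x y : G5 p) : (x * y).d = x.d + y.d := rfl
@[simp] lemma mul_e (x y : G5 p) : (x * y).e = x.e + y.e + x.d * y.d := rfl

@[simp] lemma inv_a (x : G5 p) : (x⁻¹).a = -x.a := rfl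
@[simp] lemma inv_b (x : G5 p) : (x⁻¹).b = -x.b + x.a * x.d := rfl
@[simp] lemma inv_c (x : G5 p) :
    (x⁻¹).c = -x.c + x.a * x.e - x.a * x.d * x.d + x.b * x.d := rfl
@[simp] lemma inv_d (x : G5 p) : (x⁻¹).d = -x.d := rfl
@[simp] lemma inv_e (x : G5 p) : (x⁻¹).e = -x.e + x.d * x.d := rfl

instance : Group (G5 p) where
  mul_assoc x y z := by ext <;> simp <;> ring
  one_mul x := by ext <;> simp
  mul_one x := by ext <;> simp
  inv_mul_cancel x := by ext <;> simp <;> ring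

/-- The central element `z`. -/
def zElt (p : ℕ) : G5 p := ⟨0, 0, 1, 0, 0⟩

lemma zElt_pow (n : ℕ) : (zElt p) ^ n = ⟨0, 0, (n : ZMod p), 0, 0⟩ := by
  induction n with
  | zero => ext <;> simp
  | succ n ih =>
    rw [pow_succ, ih]
    ext <;> simp [zElt] <;> push_cast <;> ring

lemma zElt_central (x : G5 p) : zElt p * x = x * zElt p := by
  ext <;> simp [zElt] <;> ring

/-- Equivalence with a quintuple, for counting. -/
def equivTuple (p : ℕ) : G5 p ≃ (ZMod p × ZMod p × ZMod p × ZMod p × ZMod p) where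
  toFun x := (x.a, x.b, x.c, x.d, x.e)
  invFun t := ⟨t.1, t.2.1, t.2.2.1, t.2.2.2.1, t.2.2.2.2⟩
  left_inv := fun ⟨_, _, _, _, _⟩ => rfl
  right_inv := fun ⟨_, _, _, _, _⟩ => rfl

noncomputable instance [NeZero p] : Fintype (G5 p) :=
  Fintype.ofEquiv _ (equivTuple p).symm

lemma card_eq [NeZero p] : Fintype.card (G5 p) = p ^ 5 := by
  rw [Fintype.card_congr (equivTuple p)]
  simp [ZMod.card]
  ring

end G5

/-- The key abstract lemma: if a group `G` contains a central element `z` of order `p`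
such that every element outside `⟨z⟩` is conjugate to its translate by a nontrivial
power of `z`, and some element `g` has a conjugate outside `g⟨z⟩`, then the group
algebra `F[G]` over a field of characteristic `p` is not centrally essential. -/
theorem not_centrallyEssential
    (F : Type*) [Field F] (p : ℕ) [Fact p.Prime] [CharP F p]
    {G : Type} [Group G] (z g h₀ : G)
    (hcen : ∀ x : G, z * x = x * z)
    (hzp : z ^ p = 1)
    (hord : ∀ k : ZMod p, z ^ k.val = 1 → k = 0)
    (hstar : ∀ u : G, (∀ k : ZMod p, u ≠ z ^ k.val) →
      ∃ h : G, ∃ j : ZMod p, j ≠ 0 ∧ u * h = h * u * z ^ j.val)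
    (hwit : ∀ k : ZMod p, h₀ * (z ^ k.val * g) ≠ g * h₀) :
    ¬ IsCentrallyEssential (MonoidAlgebra F G) := by
  classical
  haveI : NeZero p := ⟨(Fact.out : p.Prime).ne_zero⟩
  -- power arithmetic for z
  have hpow_mod : ∀ m : ℕ, z ^ (m % p) = z ^ m := by
    intro m
    conv_rhs => rw [← Nat.mod_add_div m p]
    rw [pow_add, pow_mul, hzp, one_pow, mul_one]
  have hadd : ∀ k j : ZMod p, z ^ (k + j).val = z ^ k.val * z ^ j.val := by
    intro k j
    rw [ZMod.val_add, hpow_mod, pow_add]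
  have hzero : z ^ (0 : ZMod p).val = 1 := by rw [ZMod.val_zero, pow_zero]
  have hinv : ∀ k : ZMod p, (z ^ k.val)⁻¹ = z ^ (-k).val := by
    intro k
    refine inv_eq_of_mul_eq_one_right ?_
    rw [← hadd, add_neg_cancel, hzero]
  have hinj : ∀ k m : ZMod p, z ^ k.val = z ^ m.val → k = m := by
    intro k m h
    have h1 : z ^ (k - m).val = 1 := by
      rw [sub_eq_add_neg, hadd, h, ← hinv m, mul_inv_cancel]
    have := hord _ h1
    exact sub_eq_zero.mp this
  have hcenp : ∀ (n : ℕ) (x : G), z ^ n * x = x * z ^ n := by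
    intro n x
    have hco : Commute z x := hcen x
    exact (hco.pow_left n).eq
  -- the witness element of the group algebra
  set r : MonoidAlgebra F G :=
      ∑ k : ZMod p, MonoidAlgebra.single (z ^ k.val * g) (1 : F) with hr
  have hr_apply : ∀ x : G,
      r.coeff x = ∑ k : ZMod p, if z ^ k.val * g = x then (1 : F) else 0 := by
    intro x
    rw [hr, MonoidAlgebra.coeff_sum, Finset.sum_apply']
    exact Finset.sum_congr rfl fun k _ => Finsupp.single_apply
  have hrg : r.coeff g = 1 := by
    rw [hr_apply]
    rw [Finset.sum_eq_single (0 : ZMod p)]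
    · rw [if_pos (by rw [hzero, one_mul])]
    · intro k _ hk
      rw [if_neg]
      intro hEq
      have h1 : z ^ k.val * g = 1 * g := by rw [hEq, one_mul]
      exact hk (hord k (mul_right_cancel h1))
    · intro h; exact absurd (Finset.mem_univ _) h
  have hrne : r ≠ 0 := by
    intro h0
    rw [h0] at hrg
    simp at hrg
  have hrconj : r.coeff (h₀⁻¹ * g * h₀) = 0 := by
    rw [hr_apply]
    refine Finset.sum_eq_zero fun k _ => ?_
    rw [if_neg]
    intro hEq
    apply hwit k
    rw [hEq, ← mul_assoc, ← mul_assoc, mul_inv_cancel, one_mul]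
  -- central elements are class functions
  have hclass : ∀ cc : MonoidAlgebra F G, cc ∈ Subring.center (MonoidAlgebra F G) →
      ∀ (h u : G), cc.coeff (h * u * h⁻¹) = cc.coeff u := by
    intro cc hcc h u
    have h1 := (Subring.mem_center_iff.mp hcc) (MonoidAlgebra.single h 1)
    have h2 : ((MonoidAlgebra.single h 1 * cc : MonoidAlgebra F G)).coeff (h * u)
        = ((cc * MonoidAlgebra.single h 1 : MonoidAlgebra F G)).coeff (h * u) := by rw [h1]
    rw [MonoidAlgebra.single_mul_apply, MonoidAlgebra.mul_single_apply,
      one_mul, mul_one, inv_mul_cancel_left] at h2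
    exact h2.symm
  -- Claim A : coset sums of a central element vanish off ⟨z⟩
  have claimA : ∀ cc ∈ Subring.center (MonoidAlgebra F G), ∀ v : G,
      (∀ k : ZMod p, v ≠ z ^ k.val) →
      ∑ k : ZMod p, cc.coeff (v * z ^ k.val) = 0 := by
    intro cc hcc v hv
    obtain ⟨h, j, hj, hcomm⟩ := hstar v hv
    have hconj : h⁻¹ * v * h = v * z ^ j.val := by
      calc h⁻¹ * v * h = h⁻¹ * (v * h) := by rw [mul_assoc]
        _ = h⁻¹ * (h * v * z ^ j.val) := by rw [hcomm]
        _ = v * z ^ j.val := by rw [mul_assoc h, inv_mul_cancel_left]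
    have hshift : ∀ k : ZMod p, cc.coeff (v * z ^ (k + j).val) = cc.coeff (v * z ^ k.val) := by
      intro k
      have h1 : v * z ^ (k + j).val = h⁻¹ * (v * z ^ k.val) * h := by
        calc v * z ^ (k + j).val = v * (z ^ j.val * z ^ k.val) := by
              rw [add_comm k j, hadd j k]
          _ = v * z ^ j.val * z ^ k.val := by rw [mul_assoc]
          _ = h⁻¹ * v * h * z ^ k.val := by rw [hconj]
          _ = h⁻¹ * v * (z ^ k.val * h) := by rw [mul_assoc, hcenp]
          _ = h⁻¹ * (v * z ^ k.val) * h := by rw [← mul_assoc, ← mul_assoc]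
      have h2 := hclass cc hcc h⁻¹ (v * z ^ k.val)
      rw [inv_inv] at h2
      rw [h1, h2]
    have hn : ∀ n : ℕ,
        cc.coeff (v * z ^ (((n : ZMod p)) * j).val) = cc.coeff (v * z ^ (0 : ZMod p).val) := by
      intro n
      induction n with
      | zero => norm_num
      | succ n ih =>
        have hcast : ((n + 1 : ℕ) : ZMod p) * j = ((n : ZMod p) * j) + j := by
          push_cast; ring
        rw [hcast, hshift, ih]
    have hconst : ∀ k : ZMod p,
        cc.coeff (v * z ^ k.val) = cc.coeff (v * z ^ (0 : ZMod p).val) := by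
      intro k
      have hk : k = (((k * j⁻¹).val : ZMod p)) * j := by
        rw [ZMod.natCast_val, ZMod.cast_id, mul_assoc, inv_mul_cancel₀ hj, mul_one]
      rw [hk]
      exact hn (k * j⁻¹).val
    calc ∑ k : ZMod p, cc.coeff (v * z ^ k.val)
        = ∑ _k : ZMod p, cc.coeff (v * z ^ (0 : ZMod p).val) :=
          Finset.sum_congr rfl fun k _ => hconst k
      _ = (p : F) * cc.coeff (v * z ^ (0 : ZMod p).val) := by
          rw [Finset.sum_const, Finset.card_univ, ZMod.card, nsmul_eq_mul]
      _ = 0 := by rw [CharP.cast_eq_zero F p, zero_mul]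
  -- the key identity : cc * r = s • r for central cc
  have key : ∀ cc ∈ Subring.center (MonoidAlgebra F G),
      cc * r = (∑ k : ZMod p, cc.coeff (z ^ k.val)) • r := by
    intro cc hcc
    refine MonoidAlgebra.coeff_injective (Finsupp.ext ?_)
    intro x
    rw [MonoidAlgebra.coeff_smul_apply, smul_eq_mul]
    have hL : (cc * r).coeff x = ∑ k : ZMod p, cc.coeff ((x * g⁻¹) * z ^ (-k).val) := by
      rw [hr, Finset.mul_sum, MonoidAlgebra.coeff_sum, Finset.sum_apply']
      refine Finset.sum_congr rfl fun k _ => ?_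
      rw [MonoidAlgebra.mul_single_apply, mul_one]
      congr 1
      rw [mul_inv_rev, ← mul_assoc, hinv]
    have hneg : ∑ k : ZMod p, cc.coeff ((x * g⁻¹) * z ^ (-k).val)
        = ∑ k : ZMod p, cc.coeff ((x * g⁻¹) * z ^ k.val) :=
      Fintype.sum_equiv (Equiv.neg (ZMod p)) _ _ (fun k => by simp)
    rw [hL, hneg]
    by_cases hx : ∃ m : ZMod p, z ^ m.val * g = x
    · obtain ⟨m, hm⟩ := hx
      have hv : x * g⁻¹ = z ^ m.val := by rw [← hm, mul_inv_cancel_right]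
      rw [hv]
      have hsum : ∑ k : ZMod p, cc.coeff (z ^ m.val * z ^ k.val)
          = ∑ k : ZMod p, cc.coeff (z ^ k.val) := by
        have h1 : ∀ k : ZMod p, cc.coeff (z ^ m.val * z ^ k.val) = cc.coeff (z ^ (m + k).val) := by
          intro k; rw [hadd]
        rw [Finset.sum_congr rfl fun k _ => h1 k]
        exact Fintype.sum_equiv (Equiv.addLeft m) _ _ (fun k => by simp)
      rw [hsum]
      have hrx : r.coeff x = 1 := by
        rw [hr_apply]
        rw [Finset.sum_eq_single m]
        · rw [if_pos hm]
        · intro k _ hk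
          rw [if_neg]
          intro hEq
          have h1 : z ^ k.val * g = z ^ m.val * g := by rw [hEq, hm]
          exact hk (hinj k m (mul_right_cancel h1))
        · intro h; exact absurd (Finset.mem_univ _) h
      rw [hrx, mul_one]
    · have hv : ∀ k : ZMod p, x * g⁻¹ ≠ z ^ k.val := by
        intro k hk
        exact hx ⟨k, by rw [← hk, inv_mul_cancel_right]⟩
      rw [claimA cc hcc _ hv]
      have hrx : r.coeff x = 0 := by
        rw [hr_apply]
        refine Finset.sum_eq_zero fun k _ => ?_
        rw [if_neg]
        intro hEq
        exact hx ⟨k, hEq⟩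
      rw [hrx, mul_zero]
  -- conclusion
  intro hCE
  obtain ⟨cc, hccZ, hccne, hccZ2⟩ := hCE r hrne
  have hkey := key cc hccZ
  set s : F := ∑ k : ZMod p, cc.coeff (z ^ k.val) with hs
  by_cases hs0 : s = 0
  · rw [hs0, zero_smul] at hkey
    exact hccne hkey
  · have hrZ : r ∈ Subring.center (MonoidAlgebra F G) := by
      have hrr : r = s⁻¹ • (cc * r) := by
        rw [hkey, smul_smul, inv_mul_cancel₀ hs0, one_smul]
      rw [hrr, Subring.mem_center_iff]
      intro q
      rw [mul_smul_comm, smul_mul_assoc, Subring.mem_center_iff.mp hccZ2 q]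
    have hcontr := hclass r hrZ h₀⁻¹ g
    rw [inv_inv, hrconj, hrg] at hcontr
    exact zero_ne_one hcontr

end CE5

theorem exists_group_of_order_p_pow_five_not_centrally_essential
    (F : Type*) [Field F] (p : ℕ) [Fact p.Prime] [CharP F p] :
    ∃ (G : Type) (_ : Group G) (_ : Fintype G),
      Fintype.card G = p ^ 5 ∧ ¬ IsCentrallyEssential (MonoidAlgebra F G) := by
  haveI : NeZero p := ⟨(Fact.out : p.Prime).ne_zero⟩
  haveI : Fact (1 < p) := ⟨(Fact.out : p.Prime).one_lt⟩
  refine ⟨CE5.G5 p, inferInstance, inferInstance, CE5.G5.card_eq, ?_⟩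
  refine CE5.not_centrallyEssential F p (CE5.G5.zElt p) ⟨1, 0, 0, 0, 0⟩ ⟨0, 0, 0, 1, 0⟩
    CE5.G5.zElt_central ?_ ?_ ?_ ?_
  · -- z ^ p = 1
    rw [CE5.G5.zElt_pow]
    ext <;> simp
  · -- order, via the c-coordinate
    intro k hk
    rw [CE5.G5.zElt_pow] at hk
    have := congrArg CE5.G5.c hk
    simpa [ZMod.natCast_val, ZMod.cast_id] using this
  · -- the star property
    intro u hu
    by_cases ha : u.a = 0
    · by_cases hd : u.d = 0
      · by_cases hb : u.b = 0
        · by_cases he : u.e = 0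
          · exfalso
            apply hu u.c
            rw [CE5.G5.zElt_pow]
            ext <;> simp [ha, hb, hd, he, ZMod.natCast_val, ZMod.cast_id]
          · refine ⟨⟨1, 0, 0, 0, 0⟩, -u.e, neg_ne_zero.mpr he, ?_⟩
            rw [CE5.G5.zElt_pow]
            ext <;> simp [ZMod.natCast_val, ZMod.cast_id, hd] <;> ring
        · refine ⟨⟨0, 0, 0, 1, 0⟩, u.b, hb, ?_⟩
          rw [CE5.G5.zElt_pow]
          ext <;> simp [ZMod.natCast_val, ZMod.cast_id, ha] <;> ring
      · refine ⟨⟨0, 1, 0, 0, 0⟩, -u.d, neg_ne_zero.mpr hd, ?_⟩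
        rw [CE5.G5.zElt_pow]
        ext <;> simp [ZMod.natCast_val, ZMod.cast_id] <;> ring
    · refine ⟨⟨0, 0, 0, 0, 1⟩, u.a, ha, ?_⟩
      rw [CE5.G5.zElt_pow]
      ext <;> simp [ZMod.natCast_val, ZMod.cast_id] <;> ring
  · -- the witness conjugation
    intro k hEq
    rw [CE5.G5.zElt_pow] at hEq
    have := congrArg CE5.G5.b hEq
    simp at this
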